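/- Let V be a module over ℂ and work in the exterior algebra Λ(V) over ℂ, writing ∧ for the product and regarding elements of V as degree-one elements. Let ω¹, ω², θ¹₁, θ¹₂, θ²₁, θ²₂ ∈ V, let R¹₁, R¹₂, R²₁, R²₂ ∈ ℂ, and set ω = ω¹ + i·ω², ζ = (θ¹₁ − θ²₂) + i·(θ¹₂ + θ²₁), Dθⁱⱼ = −(θⁱ₁∧θ¹ⱼ + θⁱ₂∧θ²ⱼ) + Rⁱⱼ·(ω¹∧ω²) (the expression for dθⁱⱼ forced by the second structure equation with semibasic curvature), and Dζ = (Dθ¹₁ − Dθ²₂) + i·(Dθ¹₂ + Dθ²₁). Then Dζ ∧ ω ∧ ζ = 0. (This is the other computation showing that the almost complex structure J whose (1,0)-forms are spanned by ω and ζ is integrable.) -/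

import Mathlib

open ExteriorAlgebra

private lemma swap_aux {V : Type*} [AddCommGroup V] [Module ℂ V] (x y : V) :
    ExteriorAlgebra.ι ℂ y * ExteriorAlgebra.ι ℂ x
      = -(ExteriorAlgebra.ι ℂ x * ExteriorAlgebra.ι ℂ y) := by
  exact eq_neg_of_add_eq_zero_right (ExteriorAlgebra.ι_add_mul_swap (R := ℂ) x y)

private lemma quad_aux {V : Type*} [AddCommGroup V] [Module ℂ V] (s m w : V) :
    ExteriorAlgebra.ι ℂ s * ExteriorAlgebra.ι ℂ m * ExteriorAlgebra.ι ℂ w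
      * ExteriorAlgebra.ι ℂ s = 0 := by
  set ι := ExteriorAlgebra.ι ℂ (M := V)
  have h1 : ι w * ι s = -(ι s * ι w) := swap_aux s w
  have h2 : ι m * ι s = -(ι s * ι m) := swap_aux s m
  have h3 : ι s * ι s = 0 := ExteriorAlgebra.ι_sq_zero s
  calc ι s * ι m * ι w * ι s = ι s * ι m * (ι w * ι s) := by noncomm_ring
    _ = -(ι s * (ι m * ι s) * ι w) := by rw [h1]; noncomm_ring
    _ = ι s * ι s * ι m * ι w := by rw [h2]; noncomm_ring
    _ = 0 := by rw [h3]; noncomm_ring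

/-- In the exterior algebra over `ℂ` of a `ℂ`-module `V`, with
`ω = ω¹ + i·ω²`, `ζ = (θ¹₁ − θ²₂) + i·(θ¹₂ + θ²₁)`,
`Dθⁱⱼ = −(θⁱ₁∧θ¹ⱼ + θⁱ₂∧θ²ⱼ) + Rⁱⱼ·(ω¹∧ω²)` (the expression for `dθⁱⱼ` forced by the second
structure equation with semibasic curvature) and `Dζ = (Dθ¹₁ − Dθ²₂) + i·(Dθ¹₂ + Dθ²₁)`,
one has `Dζ ∧ ω ∧ ζ = 0` (the other computation showing that `J` is integrable). -/
theorem stmt7 (V : Type*) [AddCommGroup V] [Module ℂ V]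
    (ω1 ω2 θ11 θ12 θ21 θ22 : V) (R11 R12 R21 R22 : ℂ) :
    let ι : V →ₗ[ℂ] ExteriorAlgebra ℂ V := ExteriorAlgebra.ι ℂ
    let ω : ExteriorAlgebra ℂ V := ι (ω1 + Complex.I • ω2)
    let ζ : ExteriorAlgebra ℂ V := ι ((θ11 - θ22) + Complex.I • (θ12 + θ21))
    let Dθ11 : ExteriorAlgebra ℂ V :=
      -(ι θ11 * ι θ11 + ι θ12 * ι θ21) + R11 • (ι ω1 * ι ω2)
    let Dθ12 : ExteriorAlgebra ℂ V :=
      -(ι θ11 * ι θ12 + ι θ12 * ι θ22) + R12 • (ι ω1 * ι ω2)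
    let Dθ21 : ExteriorAlgebra ℂ V :=
      -(ι θ21 * ι θ11 + ι θ22 * ι θ21) + R21 • (ι ω1 * ι ω2)
    let Dθ22 : ExteriorAlgebra ℂ V :=
      -(ι θ21 * ι θ12 + ι θ22 * ι θ22) + R22 • (ι ω1 * ι ω2)
    let Dζ : ExteriorAlgebra ℂ V := (Dθ11 - Dθ22) + Complex.I • (Dθ12 + Dθ21)
    Dζ * ω * ζ = 0 := by
  intro ι ω ζ Dθ11 Dθ12 Dθ21 Dθ22 Dζ
  set s : V := (θ11 - θ22) + Complex.I • (θ12 + θ21) with hs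
  set m : V := Complex.I • (θ21 - θ12) with hm
  set K : ℂ := (R11 - R22) + Complex.I * (R12 + R21) with hK
  -- Step 1: Dζ = ζ * ι m + K • (ι ω1 * ι ω2)
  have hstep1 : Dζ = ζ * ι m + K • (ι ω1 * ι ω2) := by
    show (Dθ11 - Dθ22) + Complex.I • (Dθ12 + Dθ21) = _
    simp only [hs, hm, ζ, Dθ11, Dθ12, Dθ21, Dθ22, map_add, map_sub, map_smul]
    have haa := ExteriorAlgebra.ι_sq_zero (R := ℂ) θ11
    have hbb := ExteriorAlgebra.ι_sq_zero (R := ℂ) θ12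
    have hcc := ExteriorAlgebra.ι_sq_zero (R := ℂ) θ21
    have hdd := ExteriorAlgebra.ι_sq_zero (R := ℂ) θ22
    have hcb := swap_aux (V := V) θ12 θ21
    have hca := swap_aux (V := V) θ11 θ21
    have hdc := swap_aux (V := V) θ21 θ22
    have hdb := swap_aux (V := V) θ12 θ22
    have hII : (Complex.I * Complex.I : ℂ) = -1 := Complex.I_mul_I
    simp only [smul_add, smul_sub, mul_add, add_mul, sub_mul, mul_sub, smul_mul_assoc,
      mul_smul_comm, smul_smul, hK]
    rw [haa, hbb, hcc, hdd, hcb, hca, hdc, hdb, hII]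
    module
  -- Step 2: the two pieces vanish
  have hζ : ζ * ι m * ω * ζ = 0 := quad_aux s m (ω1 + Complex.I • ω2)
  have hω : ι ω1 * ι ω2 * ω = 0 := by
    show ι ω1 * ι ω2 * ι (ω1 + Complex.I • ω2) = 0
    have h21 := swap_aux (V := V) ω1 ω2
    have h11 := ExteriorAlgebra.ι_sq_zero (R := ℂ) ω1
    have h22 := ExteriorAlgebra.ι_sq_zero (R := ℂ) ω2
    simp only [map_add, map_smul, mul_add, mul_smul_comm, mul_assoc]
    rw [h21, h22]
    simp [mul_neg, ← mul_assoc, h11, ι]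
  calc Dζ * ω * ζ = (ζ * ι m + K • (ι ω1 * ι ω2)) * ω * ζ := by rw [hstep1]
    _ = ζ * ι m * ω * ζ + K • (ι ω1 * ι ω2 * ω) * ζ := by
        simp only [add_mul, smul_mul_assoc]
    _ = 0 := by rw [hζ, hω]; simp
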